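/- arXiv:0906.1793 — 4 statements merged into one kernel-verified Lean document; each statement's English description precedes it below -/
import Mathlib

section
/- Let (g_1, g_2, g_3) be a Hurwitz factorization of type (5; 2-2, 4, 4); that is, g_1, g_2, g_3 ∈ S_5 with g_1 of cycle type {2, 2}, g_2 and g_3 being 4-cycles, g_1 g_2 g_3 = 1, and ⟨g_1, g_2, g_3⟩ transitive. Then the subgroup ⟨g_1, g_2, g_3⟩ of S_5 is isomorphic as an abstract group to F_5 ⋊ F_5^×, i.e., to ZMod 5 ⋊ (ZMod 5)^× with units acting by multiplication (the affine group of order 20). -/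
open Equiv

set_option maxRecDepth 100000

/-- The natural monoid homomorphism `AddAut A →* MulAut (Multiplicative A)`. -/
def addAutToMulAut (A : Type*) [AddGroup A] : Multiplicative (AddAut A) →* MulAut (Multiplicative A) where
  toFun e := AddEquiv.toMultiplicative (Multiplicative.toAdd e)
  map_one' := rfl
  map_mul' _ _ := rfl

/-- The action of `(ZMod p)ˣ` on the additive group `ZMod p` by multiplication, as a
homomorphism `(ZMod p)ˣ →* MulAut (Multiplicative (ZMod p))`. -/
def unitsMulAction (p : ℕ) : (ZMod p)ˣ →* MulAut (Multiplicative (ZMod p)) :=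
  (addAutToMulAut (ZMod p)).comp (DistribMulAction.toAddAut (ZMod p)ˣ (ZMod p))

abbrev G20 := Multiplicative (ZMod 5) ⋊[unitsMulAction 5] (ZMod 5)ˣ

def c₄ : Perm (Fin 5) := ⟨![1,2,3,0,4], ![3,0,1,2,4], by decide, by decide⟩

def Aff (h : Perm (ZMod 5)) : Prop :=
  (h 1 - h 0 ≠ 0) ∧ ∀ x : ZMod 5, h x = (h 1 - h 0) * x + h 0

instance (h : Perm (ZMod 5)) : Decidable (Aff h) := by unfold Aff; infer_instance

instance (h : Perm (Fin 5)) : Decidable (Aff h) := by unfold Aff; infer_instance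

theorem decA : ∀ g : Perm (Fin 5), g^4 = 1 → g^2 ≠ 1 → g.support.card = 4 →
    ∃ c : Perm (Fin 5), c * c₄ * c⁻¹ = g := by decide

theorem decB : ∀ g : Perm (Fin 5), g^2 = 1 → g.support.card = 4 →
    (g * c₄)^4 = 1 → (g * c₄)^2 ≠ 1 → (g * c₄).support.card = 4 →
    (∃ x, g x = x ∧ c₄ x = x) ∨
    ∃ c : Perm (Fin 5), Aff (c⁻¹ * g * c) ∧ Aff (c⁻¹ * c₄ * c) := by decide

theorem zmod5_isUnit : ∀ x : ZMod 5, x ≠ 0 → IsUnit x := by decide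

def affPerm (a : (ZMod 5)ˣ) (b : ZMod 5) : Perm (ZMod 5) where
  toFun x := a * x + b
  invFun y := (a⁻¹ : (ZMod 5)ˣ) * (y - b)
  left_inv x := by simp [← mul_assoc]
  right_inv y := by simp [← mul_assoc]

def φ : G20 →* Perm (ZMod 5) where
  toFun g := affPerm g.right g.left.toAdd
  map_one' := by ext x; simp [affPerm]
  map_mul' g h := by
    ext x
    simp [affPerm, SemidirectProduct.mul_left, SemidirectProduct.mul_right,
      unitsMulAction, addAutToMulAut, MonoidHom.coe_mk, OneHom.coe_mk, Perm.mul_apply, Units.smul_def, smul_eq_mul]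
    change _ + (_ + (g.right : ZMod 5) * Multiplicative.toAdd h.left) = _
    ring

theorem φ_inj : Function.Injective φ := by
  rw [injective_iff_map_eq_one]
  intro g hg
  have h0 := congrArg (fun p : Perm (ZMod 5) => p 0) hg
  have h1 := congrArg (fun p : Perm (ZMod 5) => p 1) hg
  simp [φ, affPerm] at h0 h1
  have hb : Multiplicative.toAdd g.left = 0 := by simpa using h0
  rw [hb, add_zero] at h1
  ext
  · exact hb
  · simpa using h1

theorem card_G20 : Nat.card G20 = 20 := by
  have e : G20 ≃ (Multiplicative (ZMod 5)) × (ZMod 5)ˣ :=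
    ⟨fun g => (g.left, g.right), fun p => ⟨p.1, p.2⟩, fun g => rfl, fun p => rfl⟩
  rw [Nat.card_congr e, Nat.card_prod]
  have h4 : Nat.card (ZMod 5)ˣ = 4 := by
    rw [Nat.card_eq_fintype_card, ZMod.card_units_eq_totient]; decide
  have h5 : Nat.card (Multiplicative (ZMod 5)) = 5 := by
    rw [Nat.card_eq_fintype_card]; rfl
  rw [h4, h5]

def Fstd : Subgroup (Perm (Fin 5)) := φ.range

theorem aff_mem_range (h : Perm (ZMod 5)) (hA : Aff h) : h ∈ φ.range := by
  obtain ⟨ha, hall⟩ := hA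
  obtain ⟨u, hu⟩ := zmod5_isUnit _ ha
  refine ⟨⟨Multiplicative.ofAdd (h 0), u⟩, ?_⟩
  ext x
  show (u : ZMod 5) * x + h 0 = h x
  rw [hu]
  exact (hall x).symm

theorem aff_mem_Fstd (h : Perm (Fin 5)) (hA : Aff h) : h ∈ Fstd :=
  aff_mem_range h hA

theorem card_Fstd : Nat.card Fstd = 20 := by
  rw [← card_G20]
  exact (Nat.card_congr (MonoidHom.ofInjective φ_inj).toEquiv).symm

theorem conjpow (c a : Perm (Fin 5)) (n : ℕ) :
    (c⁻¹ * a * c) ^ n = c⁻¹ * a ^ n * c := by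
  induction n with
  | zero => group
  | succ n ih => rw [pow_succ, ih, pow_succ]; group

/-- the monodromy group of any Hurwitz factorization of type
`(5; 2-2, 4, 4)` is isomorphic to `F₅ ⋊ F₅ˣ`, the affine group of order 20. -/
theorem hurwitz_5_22_4_4_monodromy
    (g₁ g₂ g₃ : Equiv.Perm (Fin 5))
    (hc₁ : g₁.cycleType = {2, 2}) (hc₂ : g₂.cycleType = {4}) (hc₃ : g₃.cycleType = {4})
    (hprod : g₁ * g₂ * g₃ = 1)
    (htrans : ∀ x y : Fin 5,
      ∃ h ∈ Subgroup.closure ({g₁, g₂, g₃} : Set (Equiv.Perm (Fin 5))), h x = y) :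
    Nonempty ((Subgroup.closure ({g₁, g₂, g₃} : Set (Equiv.Perm (Fin 5)))) ≃*
      Multiplicative (ZMod 5) ⋊[unitsMulAction 5] (ZMod 5)ˣ) := by
  classical
  have hg₃ : g₃ = (g₁ * g₂)⁻¹ := eq_inv_of_mul_eq_one_right hprod
  have o1 : orderOf g₁ = 2 := by rw [← Equiv.Perm.lcm_cycleType, hc₁]; decide
  have o2 : orderOf g₂ = 4 := by rw [← Equiv.Perm.lcm_cycleType, hc₂]; decide
  have o3 : orderOf g₃ = 4 := by rw [← Equiv.Perm.lcm_cycleType, hc₃]; decide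
  have s1 : g₁.support.card = 4 := by rw [← Equiv.Perm.sum_cycleType, hc₁]; decide
  have s2 : g₂.support.card = 4 := by rw [← Equiv.Perm.sum_cycleType, hc₂]; decide
  have s3 : g₃.support.card = 4 := by rw [← Equiv.Perm.sum_cycleType, hc₃]; decide
  have h2_4 : g₂ ^ 4 = 1 := by rw [← o2]; exact pow_orderOf_eq_one g₂
  have h2_2 : g₂ ^ 2 ≠ 1 := by
    intro h
    have := orderOf_dvd_of_pow_eq_one h
    rw [o2] at this; norm_num at this
  have h3_4 : g₃ ^ 4 = 1 := by rw [← o3]; exact pow_orderOf_eq_one g₃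
  have h3_2 : g₃ ^ 2 ≠ 1 := by
    intro h
    have := orderOf_dvd_of_pow_eq_one h
    rw [o3] at this; norm_num at this
  have h1_2 : g₁ ^ 2 = 1 := by rw [← o1]; exact pow_orderOf_eq_one g₁
  obtain ⟨c, hc⟩ := decA g₂ h2_4 h2_2 s2
  set e : Perm (Fin 5) ≃* Perm (Fin 5) := MulAut.conj c with he
  set g₁' : Perm (Fin 5) := c⁻¹ * g₁ * c with hg₁'
  have hc' : c₄ = c⁻¹ * g₂ * c := by rw [← hc]; group
  have he1 : e g₁' = g₁ := by simp [he, MulAut.conj_apply, hg₁']; group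
  have he2 : e c₄ = g₂ := by rw [← hc]; rfl
  have he3 : e ((g₁' * c₄)⁻¹) = g₃ := by
    rw [hg₃, map_inv, map_mul, he1, he2]
  set s' : Set (Perm (Fin 5)) := {g₁', c₄, (g₁' * c₄)⁻¹} with hs'
  have himg : (e : Perm (Fin 5) →* Perm (Fin 5)) '' s' = {g₁, g₂, g₃} := by
    simp only [hs', Set.image_insert_eq, Set.image_singleton]
    rw [show ((e : Perm (Fin 5) →* Perm (Fin 5)) g₁' = g₁) from he1,
        show ((e : Perm (Fin 5) →* Perm (Fin 5)) c₄ = g₂) from he2,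
        show ((e : Perm (Fin 5) →* Perm (Fin 5)) ((g₁' * c₄)⁻¹) = g₃) from he3]
  have hmap : (Subgroup.closure s').map (e : Perm (Fin 5) →* Perm (Fin 5))
      = Subgroup.closure {g₁, g₂, g₃} := by
    rw [MonoidHom.map_closure, himg]
  have htrans' : ∀ x y : Fin 5, ∃ h ∈ Subgroup.closure s', h x = y := by
    intro x y
    obtain ⟨h, hh, hxy⟩ := htrans (c x) (c y)
    rw [← hmap] at hh
    obtain ⟨h', hh', rfl⟩ := hh
    refine ⟨h', hh', ?_⟩
    have hxy' : c (h' (c⁻¹ (c x))) = c y := hxy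
    simpa using c.injective hxy'
  have p1 : g₁' ^ 2 = 1 := by
    rw [hg₁', conjpow, h1_2]; group
  have ps1 : g₁'.support.card = 4 := by
    have h : g₁' = c⁻¹ * g₁ * (c⁻¹)⁻¹ := by rw [hg₁']; group
    rw [h, Equiv.Perm.card_support_conj, s1]
  have hprodconj : g₁' * c₄ = c⁻¹ * g₃⁻¹ * c := by
    rw [hg₁', hc', hg₃, inv_inv]; group
  have q4 : (g₁' * c₄) ^ 4 = 1 := by
    rw [hprodconj, conjpow, inv_pow, h3_4]; group
  have q2 : (g₁' * c₄) ^ 2 ≠ 1 := by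
    intro hq
    apply h3_2
    rw [hprodconj, conjpow, inv_pow] at hq
    have h := congrArg (fun z => c * z * c⁻¹) hq
    simp only [mul_one] at h
    have h' : (g₃ ^ 2)⁻¹ = 1 := by
      calc (g₃ ^ 2)⁻¹ = c * (c⁻¹ * (g₃ ^ 2)⁻¹ * c) * c⁻¹ := by group
        _ = c * 1 * c⁻¹ := by rw [hq]
        _ = 1 := by group
    simpa using h'
  have qs : (g₁' * c₄).support.card = 4 := by
    have h : g₁' * c₄ = c⁻¹ * g₃⁻¹ * (c⁻¹)⁻¹ := by rw [hprodconj]; group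
    rw [h, Equiv.Perm.card_support_conj]
    simpa using s3
  rcases decB g₁' p1 ps1 q4 q2 qs with ⟨x, hx1, hx2⟩ | ⟨d, hA1, hA2⟩
  · -- impossible: common fixed point contradicts transitivity
    exfalso
    have hfix : ∀ h ∈ Subgroup.closure s', h x = x := by
      intro h hh
      induction hh using Subgroup.closure_induction with
      | mem z hz =>
        rcases hz with rfl | rfl | rfl
        · exact hx1
        · exact hx2
        · show (g₁' * c₄)⁻¹ x = x
          have hfx : (g₁' * c₄) x = x := by
            show g₁' (c₄ x) = x
            rw [hx2, hx1]
          conv_lhs => rw [← hfx]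
          simp
      | one => rfl
      | mul a b ha hb pa pb => show a (b x) = x; rw [pb, pa]
      | inv a ha pa =>
        conv_lhs => rw [← pa]
        simp
    obtain ⟨h, hh, hxy⟩ := htrans' x (x + 1)
    rw [hfix h hh] at hxy
    have h10 : (1 : Fin 5) = 0 := by
      have := congrArg (fun z => z - x) hxy.symm
      simpa using this
    exact one_ne_zero h10
  · -- the monodromy group is the conjugate of the standard affine group by d
    set F : Subgroup (Perm (Fin 5)) :=
      Subgroup.map ((MulAut.conj d : Perm (Fin 5) ≃* Perm (Fin 5)) :
        Perm (Fin 5) →* Perm (Fin 5)) Fstd with hF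
    have memF : ∀ g : Perm (Fin 5), Aff (d⁻¹ * g * d) → g ∈ F := by
      intro g hA
      refine ⟨d⁻¹ * g * d, aff_mem_Fstd _ hA, ?_⟩
      show d * (d⁻¹ * g * d) * d⁻¹ = g
      group
    have hg₁'F : g₁' ∈ F := memF _ hA1
    have hc₄F : c₄ ∈ F := memF _ hA2
    have hle : Subgroup.closure s' ≤ F := by
      rw [Subgroup.closure_le]
      rintro z hz
      rcases hz with rfl | rfl | rfl
      · exact hg₁'F
      · exact hc₄F
      · exact F.inv_mem (F.mul_mem hg₁'F hc₄F)
    have cardF : Nat.card F = 20 := by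
      rw [hF, ← card_Fstd]
      exact (Nat.card_congr (MulEquiv.subgroupMap
        (MulAut.conj d : Perm (Fin 5) ≃* Perm (Fin 5)) Fstd).toEquiv).symm
    set K := Subgroup.closure s' with hK
    have h4dvd : 4 ∣ Nat.card K := by
      have hc₄K : c₄ ∈ K := Subgroup.subset_closure (by simp [hs'])
      have hoc : orderOf c₄ = 4 := by
        have := orderOf_eq_prime_pow (x := c₄) (p := 2) (n := 1) (by decide) (by decide)
        simpa using this
      have hocK : orderOf (⟨c₄, hc₄K⟩ : K) = 4 := by
        rw [← hoc]
        exact (orderOf_injective K.subtype Subtype.coe_injective ⟨c₄, hc₄K⟩).symm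
      rw [← hocK]
      exact orderOf_dvd_natCard _
    have h5dvd : 5 ∣ Nat.card K := by
      have horb : MulAction.orbit K (0 : Fin 5) = Set.univ := by
        ext y
        simp only [Set.mem_univ, iff_true, MulAction.mem_orbit_iff]
        obtain ⟨h, hh, hy⟩ := htrans' 0 y
        exact ⟨⟨h, hh⟩, hy⟩
      letI : Fintype K := Fintype.ofFinite _
      letI : Fintype (MulAction.orbit K (0 : Fin 5)) := Fintype.ofFinite _
      have hstab := MulAction.card_orbit_mul_card_stabilizer_eq_card_group K (0 : Fin 5)
      have horbcard : Fintype.card (MulAction.orbit K (0 : Fin 5)) = 5 := by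
        rw [← Nat.card_eq_fintype_card, Nat.card_congr (Equiv.setCongr horb),
          Nat.card_congr (Equiv.Set.univ (Fin 5))]
        simp
      rw [horbcard] at hstab
      rw [Nat.card_eq_fintype_card]
      exact ⟨_, hstab.symm⟩
    have h20dvd : 20 ∣ Nat.card K :=
      (Nat.Coprime.mul_dvd_of_dvd_of_dvd (by norm_num) h4dvd h5dvd : 4 * 5 ∣ _)
    have hdvd20 : Nat.card K ∣ 20 := cardF ▸ Subgroup.card_dvd_of_le hle
    have hcardK : Nat.card K = 20 := Nat.dvd_antisymm hdvd20 h20dvd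
    have heq : K = F := Subgroup.eq_of_le_of_card_ge hle (by rw [cardF, hcardK])
    exact ⟨((MulEquiv.subgroupCongr hmap.symm).trans
      ((MulEquiv.subgroupMap e K).symm.trans
      ((MulEquiv.subgroupCongr heq).trans
      ((MulEquiv.subgroupMap (MulAut.conj d : Perm (Fin 5) ≃* Perm (Fin 5)) Fstd).symm.trans
      (MonoidHom.ofInjective φ_inj).symm))))⟩
end

section
/- Let d ≥ 2 and let e_1, e_2, e_3, e_4 be integers with 2 ≤ e_1 ≤ e_2 ≤ e_3 ≤ e_4 ≤ d, e_1 + e_2 + e_3 + e_4 = 2d + 2, and d + 1 ≥ e_2 + e_3. Let m ≥ 1 be an integer. Then there exists a Hurwitz factorization (g_1, g_2, g_3, g_4) of type (d; e_1, e_2, e_3, e_4) such that the product g_3 g_4 is a single m-cycle (meaning the identity permutation when m = 1) if and only if e_4 − e_3 + 1 ≤ m ≤ 2d + 1 − e_3 − e_4 and m ≡ e_2 − e_1 + 1 (mod 2). -/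
open List Equiv Equiv.Perm

namespace HurAux2

lemma fp_eval' (l : List ℕ) (hl : l.Nodup) (i j k k' : ℕ) (hi : i < l.length)
    (hj : (i + 1) % l.length = j) (hjl : j < l.length)
    (h1 : l[i] = k) (h2 : l[j] = k') : formPerm l k = k' := by
  subst h1
  rw [List.formPerm_apply_getElem l hl i hi]
  subst h2
  congr 1

lemma alpha_getElem (s t i : ℕ) (h1 : i < s + t) :
    (List.range s ++ (List.range' s t).reverse)[i]'(by simp; omega) =
      if i < s then i else 2*s + t - 1 - i := by
  split
  · rw [List.getElem_append_left (by simpa)]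
    simp
  · rw [List.getElem_append_right (by simp; omega)]
    rw [List.getElem_reverse]
    rw [List.getElem_range']
    simp
    omega

lemma gamma_getElem (s t m i : ℕ) (ht : t ≤ m) (h1 : i < s + (m - t) + 1) :
    (List.range s ++ List.range' (s+t) (m-t) ++ [s])[i]'(by simp; omega) =
      if i < s then i else if i < s + (m - t) then t + i else s := by
  split
  · rw [List.getElem_append_left (by simp; omega), List.getElem_append_left (by simpa)]
    simp
  · split
    · rw [List.getElem_append_left (by simp; omega), List.getElem_append_right (by simp; omega)]
      rw [List.getElem_range']
      simp
      omega
    · rw [List.getElem_append_right (by simp; omega)]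
      simp

end HurAux2

namespace HurAux2

-- run application lemmas
lemma run_out (a n k : ℕ) (h : k < a ∨ a + n ≤ k) :
    formPerm (List.range' a n) k = k := by
  apply List.formPerm_apply_of_notMem
  simp only [List.mem_range'_1]
  omega

lemma run_mid (a n k : ℕ) (h1 : a ≤ k) (h2 : k + 1 < a + n) :
    formPerm (List.range' a n) k = k + 1 := by
  have hlen : (List.range' a n).length = n := List.length_range' ..
  have hi : k - a < (List.range' a n).length := by omega
  have e1 : (List.range' a n)[k - a] = k := by
    rw [List.getElem_range']; omega
  have := List.formPerm_apply_getElem (List.range' a n) ((List.nodup_range' (s := a) (n := n))) (k - a) hi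
  rw [e1] at this
  rw [this, List.getElem_range']
  have : (k - a + 1) % (List.range' a n).length = k - a + 1 := by
    rw [hlen]; apply Nat.mod_eq_of_lt; omega
  omega

lemma run_last (a n : ℕ) (h : 0 < n) :
    formPerm (List.range' a n) (a + n - 1) = a := by
  have hlen : (List.range' a n).length = n := List.length_range' ..
  have hi : n - 1 < (List.range' a n).length := by omega
  have e1 : (List.range' a n)[n - 1] = a + n - 1 := by
    rw [List.getElem_range']; omega
  have := List.formPerm_apply_getElem (List.range' a n) ((List.nodup_range' (s := a) (n := n))) (n - 1) hi
  rw [e1] at this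
  rw [this, List.getElem_range']
  have h2 : (n - 1 + 1) % (List.range' a n).length = 0 := by
    rw [hlen]
    have : n - 1 + 1 = n := by omega
    rw [this, Nat.mod_self]
  omega


section Alpha
variable (s t : ℕ)

lemma alpha_len : (List.range s ++ (List.range' s t).reverse).length = s + t := by simp

lemma alpha_nodup' : (List.range s ++ (List.range' s t).reverse).Nodup := by
  refine List.Nodup.append (List.nodup_range) ((List.nodup_reverse).2 ((List.nodup_range' (s := s) (n := t)))) ?_
  intro x hx hx'
  simp only [List.mem_range] at hx
  simp only [List.mem_reverse, List.mem_range'_1] at hx'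
  omega

lemma alpha_out (k : ℕ) (h : s + t ≤ k) :
    formPerm (List.range s ++ (List.range' s t).reverse) k = k := by
  apply List.formPerm_apply_of_notMem
  simp only [List.mem_append, List.mem_range, List.mem_reverse, List.mem_range'_1]
  omega

lemma alpha_lt (k : ℕ) (h : k + 1 < s) :
    formPerm (List.range s ++ (List.range' s t).reverse) k = k + 1 := by
  refine fp_eval' _ (alpha_nodup' s t) k (k+1) _ _ (by rw [alpha_len]; omega) ?_
    (by rw [alpha_len]; omega) ?_ ?_
  · rw [alpha_len]; exact Nat.mod_eq_of_lt (by omega)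
  · rw [alpha_getElem s t k (by omega)]; simp; omega
  · rw [alpha_getElem s t (k+1) (by omega)]; simp; omega

lemma alpha_top (h : 0 < s) (ht : 0 < t) :
    formPerm (List.range s ++ (List.range' s t).reverse) (s - 1) = s + t - 1 := by
  refine fp_eval' _ (alpha_nodup' s t) (s-1) s _ _ (by rw [alpha_len]; omega) ?_
    (by rw [alpha_len]; omega) ?_ ?_
  · rw [alpha_len]; rw [show s - 1 + 1 = s by omega]; exact Nat.mod_eq_of_lt (by omega)
  · rw [alpha_getElem s t (s-1) (by omega)]; simp; omega
  · rw [alpha_getElem s t s (by omega)]; simp; omega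

lemma alpha_mid (k : ℕ) (h1 : s + 1 ≤ k) (h2 : k < s + t) :
    formPerm (List.range s ++ (List.range' s t).reverse) k = k - 1 := by
  refine fp_eval' _ (alpha_nodup' s t) (2*s+t-1-k) (2*s+t-k) _ _ (by rw [alpha_len]; omega) ?_
    (by rw [alpha_len]; omega) ?_ ?_
  · rw [alpha_len]; rw [show 2*s+t-1-k + 1 = 2*s+t-k by omega]; exact Nat.mod_eq_of_lt (by omega)
  · rw [alpha_getElem s t _ (by omega)]; rw [if_neg (by omega)]; omega
  · rw [alpha_getElem s t _ (by omega)]; rw [if_neg (by omega)]; omega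

lemma alpha_s_pos (h : 0 < s) (ht : 0 < t) :
    formPerm (List.range s ++ (List.range' s t).reverse) s = 0 := by
  refine fp_eval' _ (alpha_nodup' s t) (s+t-1) 0 _ _ (by rw [alpha_len]; omega) ?_
    (by rw [alpha_len]; omega) ?_ ?_
  · rw [alpha_len]; rw [show s+t-1 + 1 = s+t by omega]; exact Nat.mod_self _
  · rw [alpha_getElem s t _ (by omega)]; rw [if_neg (by omega)]; omega
  · rw [alpha_getElem s t 0 (by omega)]; rw [if_pos (by omega)]

lemma alpha_s_zero (ht : 0 < t) :
    formPerm (List.range 0 ++ (List.range' 0 t).reverse) 0 = t - 1 := by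
  by_cases h1 : t = 1
  · subst h1
    rw [show List.range 0 ++ (List.range' 0 1).reverse = [0] from rfl]
    simp
  · refine fp_eval' _ (alpha_nodup' 0 t) (t-1) 0 _ _ (by rw [alpha_len]; omega) ?_
      (by rw [alpha_len]; omega) ?_ ?_
    · rw [alpha_len]; rw [show t-1 + 1 = t by omega]; simp [Nat.mod_self]
    · rw [alpha_getElem 0 t _ (by omega)]; rw [if_neg (by omega)]; omega
    · rw [alpha_getElem 0 t 0 (by omega)]; rw [if_neg (by omega)]; omega

end Alpha

section Gamma
variable (s t m : ℕ)

lemma gamma_len : (List.range s ++ List.range' (s+t) (m-t) ++ [s]).length = s + (m-t) + 1 := by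
  simp; omega

lemma gamma_nodup' (ht : 1 ≤ t) : (List.range s ++ List.range' (s+t) (m-t) ++ [s]).Nodup := by
  refine List.Nodup.append ?_ (List.nodup_singleton s) ?_
  · refine List.Nodup.append (List.nodup_range) (List.nodup_range') ?_
    intro x hx hx'
    simp only [List.mem_range] at hx
    simp only [List.mem_range'_1] at hx'
    omega
  · intro x hx hx'
    simp only [List.mem_singleton] at hx'
    subst hx'
    simp only [List.mem_append, List.mem_range, List.mem_range'_1] at hx
    omega

lemma gamma_fixed (ht1 : 1 ≤ t) (ht : t ≤ m) (k : ℕ)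
    (h : (s + 1 ≤ k ∧ k < s + t) ∨ s + m ≤ k) :
    formPerm (List.range s ++ List.range' (s+t) (m-t) ++ [s]) k = k := by
  apply List.formPerm_apply_of_notMem
  simp only [List.mem_append, List.mem_range, List.mem_range'_1, List.mem_singleton]
  omega

lemma gamma_lt (ht : 1 ≤ t) (htm : t ≤ m) (k : ℕ) (h : k + 1 < s) :
    formPerm (List.range s ++ List.range' (s+t) (m-t) ++ [s]) k = k + 1 := by
  refine fp_eval' _ (gamma_nodup' s t m ht) k (k+1) _ _ (by rw [gamma_len]; omega) ?_
    (by rw [gamma_len]; omega) ?_ ?_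
  · rw [gamma_len]; exact Nat.mod_eq_of_lt (by omega)
  · rw [gamma_getElem s t m k htm (by omega)]; rw [if_pos (by omega)]
  · rw [gamma_getElem s t m (k+1) htm (by omega)]; rw [if_pos (by omega)]

lemma gamma_top (ht : 1 ≤ t) (htm : t ≤ m) (h : 0 < s) :
    formPerm (List.range s ++ List.range' (s+t) (m-t) ++ [s]) (s - 1) =
      if t < m then s + t else s := by
  refine fp_eval' _ (gamma_nodup' s t m ht) (s-1) s _ _ (by rw [gamma_len]; omega) ?_
    (by rw [gamma_len]; omega) ?_ ?_
  · rw [gamma_len]; rw [show s - 1 + 1 = s by omega]; exact Nat.mod_eq_of_lt (by omega)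
  · rw [gamma_getElem s t m (s-1) htm (by omega)]; rw [if_pos (by omega)]
  · rw [gamma_getElem s t m s htm (by omega)]
    rw [if_neg (by omega)]
    by_cases h2 : t < m
    · rw [if_pos (by omega), if_pos h2]; omega
    · rw [if_neg (by omega), if_neg h2]

lemma gamma_mid (ht : 1 ≤ t) (htm : t ≤ m) (k : ℕ) (h1 : s + t ≤ k) (h2 : k + 1 < s + m) :
    formPerm (List.range s ++ List.range' (s+t) (m-t) ++ [s]) k = k + 1 := by
  refine fp_eval' _ (gamma_nodup' s t m ht) (k - t) (k + 1 - t) _ _ (by rw [gamma_len]; omega) ?_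
    (by rw [gamma_len]; omega) ?_ ?_
  · rw [gamma_len]; rw [show k - t + 1 = k + 1 - t by omega]; exact Nat.mod_eq_of_lt (by omega)
  · rw [gamma_getElem s t m _ htm (by omega)]
    rw [if_neg (by omega), if_pos (by omega)]; omega
  · rw [gamma_getElem s t m _ htm (by omega)]
    rw [if_neg (by omega), if_pos (by omega)]; omega

lemma gamma_last (ht : 1 ≤ t) (htm : t < m) :
    formPerm (List.range s ++ List.range' (s+t) (m-t) ++ [s]) (s + m - 1) = s := by
  refine fp_eval' _ (gamma_nodup' s t m ht) (s + (m-t) - 1) (s + (m-t)) _ _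
    (by rw [gamma_len]; omega) ?_ (by rw [gamma_len]; omega) ?_ ?_
  · rw [gamma_len]; rw [show s + (m-t) - 1 + 1 = s + (m-t) by omega]
    exact Nat.mod_eq_of_lt (by omega)
  · rw [gamma_getElem s t m _ (le_of_lt htm) (by omega)]
    rw [if_neg (by omega), if_pos (by omega)]; omega
  · rw [gamma_getElem s t m _ (le_of_lt htm) (by omega)]
    rw [if_neg (by omega), if_neg (by omega)]

lemma gamma_s (ht : 1 ≤ t) (htm : t ≤ m) :
    formPerm (List.range s ++ List.range' (s+t) (m-t) ++ [s]) s =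
      if 0 < s then 0 else if t < m then s + t else s := by
  by_cases hq : t < m
  · refine fp_eval' _ (gamma_nodup' s t m ht) (s + (m-t)) 0 _ _ (by rw [gamma_len]; omega) ?_
      (by rw [gamma_len]; omega) ?_ ?_
    · rw [gamma_len]; exact Nat.mod_self _
    · rw [gamma_getElem s t m _ htm (by omega)]
      rw [if_neg (by omega), if_neg (by omega)]
    · rw [gamma_getElem s t m 0 htm (by omega)]
      by_cases hs : 0 < s
      · rw [if_pos hs, if_pos hs]
      · rw [if_neg hs, if_neg hs, if_pos (by omega), if_pos hq]; omega
  · -- t = m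
    have htm' : t = m := by omega
    by_cases hs : 0 < s
    · refine fp_eval' _ (gamma_nodup' s t m ht) (s + (m-t)) 0 _ _ (by rw [gamma_len]; omega) ?_
        (by rw [gamma_len]; omega) ?_ ?_
      · rw [gamma_len]; exact Nat.mod_self _
      · rw [gamma_getElem s t m _ htm (by omega)]
        rw [if_neg (by omega), if_neg (by omega)]
      · rw [gamma_getElem s t m 0 htm (by omega)]
        rw [if_pos hs, if_pos hs]
    · have hs0 : s = 0 := by omega
      subst hs0
      rw [show m - t = 0 by omega]
      rw [show List.range 0 ++ List.range' (0+t) 0 ++ [0] = [0] from rfl]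
      simp [if_neg hq]

end Gamma

end HurAux2

namespace HurAux2

theorem core (s t m : ℕ) (ht : 1 ≤ t) (htm : t ≤ m) :
    formPerm (List.range' s m) * formPerm (List.range s ++ (List.range' s t).reverse)
      = formPerm (List.range s ++ List.range' (s+t) (m-t) ++ [s]) := by
  ext x
  rw [Equiv.Perm.mul_apply]
  have hcase : x+1 < s ∨ (0 < s ∧ x = s-1) ∨ (s+1 ≤ x ∧ x < s+t) ∨ x = s ∨
      (s+t ≤ x ∧ x+1 < s+m) ∨ (t < m ∧ x = s+m-1) ∨ s+m ≤ x := by omega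
  rcases hcase with h | ⟨hs, h⟩ | ⟨h1, h2⟩ | h | ⟨h1, h2⟩ | ⟨h1, h2⟩ | h
  · rw [alpha_lt s t x h, run_out s m (x+1) (by omega), gamma_lt s t m ht htm x h]
  · subst h
    rw [alpha_top s t hs (by omega), gamma_top s t m ht htm hs]
    by_cases h2 : t < m
    · rw [run_mid s m _ (by omega) (by omega), if_pos h2]
      omega
    · rw [show s + t - 1 = s + m - 1 by omega, run_last s m (by omega), if_neg h2]
  · rw [alpha_mid s t x h1 h2, run_mid s m _ (by omega) (by omega),
      gamma_fixed s t m ht htm x (by omega)]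
    omega
  · rw [h]
    by_cases hs : 0 < s
    · rw [alpha_s_pos s t hs (by omega), run_out s m 0 (by omega), gamma_s s t m ht htm,
        if_pos hs]
    · have hs0 : s = 0 := by omega
      subst hs0
      rw [alpha_s_zero t (by omega), gamma_s 0 t m ht htm, if_neg hs]
      by_cases h2 : t < m
      · rw [run_mid 0 m _ (by omega) (by omega), if_pos h2]
        omega
      · rw [show t - 1 = 0 + m - 1 by omega, run_last 0 m (by omega), if_neg h2]
  · rw [alpha_out s t x (by omega), run_mid s m x (by omega) (by omega),
      gamma_mid s t m ht htm x h1 h2]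
  · subst h2
    rw [alpha_out s t _ (by omega), run_last s m (by omega), gamma_last s t m ht h1]
  · rw [alpha_out s t x (by omega), run_out s m x (by omega),
      gamma_fixed s t m ht htm x (by omega)]

end HurAux2
namespace HurAux2

lemma formPerm_map_apply {β : Type*} [DecidableEq β] (f : ℕ → β) (S : Set ℕ)
    (hf : Set.InjOn f S) (L : List ℕ) (hL : L.Nodup) (hLS : ∀ x ∈ L, x ∈ S)
    (k : ℕ) (hk : k ∈ S) :
    formPerm (L.map f) (f k) = f (formPerm L k) := by
  have hnd : (L.map f).Nodup :=
    List.Nodup.map_on (fun x hx y hy hxy => hf (hLS x hx) (hLS y hy) hxy) hL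
  by_cases hkL : k ∈ L
  · obtain ⟨i, hi, hik⟩ := List.getElem_of_mem hkL
    have h1 : (L.map f)[i]'(by simpa using hi) = f k := by
      rw [List.getElem_map]; rw [hik]
    rw [← h1, List.formPerm_apply_getElem _ hnd i (by simpa using hi)]
    rw [← hik, List.formPerm_apply_getElem _ hL i hi]
    simp [List.getElem_map]
  · have h2 : f k ∉ L.map f := by
      intro hmem
      obtain ⟨l, hl, he⟩ := List.mem_map.1 hmem
      exact hkL (hf (hLS l hl) hk he ▸ hl)
    rw [List.formPerm_apply_of_notMem h2, List.formPerm_apply_of_notMem hkL]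

lemma formPerm_map_mul {β : Type*} [DecidableEq β] (f : ℕ → β) (S : Set ℕ)
    (hf : Set.InjOn f S) (L1 L2 L3 : List ℕ)
    (hL1 : L1.Nodup) (hL2 : L2.Nodup) (hL3 : L3.Nodup)
    (hS1 : ∀ x ∈ L1, x ∈ S) (hS2 : ∀ x ∈ L2, x ∈ S) (hS3 : ∀ x ∈ L3, x ∈ S)
    (h : formPerm L1 * formPerm L2 = formPerm L3) :
    formPerm (L1.map f) * formPerm (L2.map f) = formPerm (L3.map f) := by
  ext x
  rw [Equiv.Perm.mul_apply]
  by_cases hx : ∃ k ∈ S, f k = x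
  · obtain ⟨k, hk, rfl⟩ := hx
    have hk2 : formPerm L2 k ∈ S := by
      by_cases h2 : k ∈ L2
      · exact hS2 _ (List.formPerm_apply_mem_of_mem h2)
      · rw [List.formPerm_apply_of_notMem h2]; exact hk
    rw [formPerm_map_apply f S hf L2 hL2 hS2 k hk,
        formPerm_map_apply f S hf L1 hL1 hS1 _ hk2,
        formPerm_map_apply f S hf L3 hL3 hS3 k hk]
    have h' : formPerm L1 (formPerm L2 k) = formPerm L3 k := by
      rw [← Equiv.Perm.mul_apply, h]
    rw [h']
  · push_neg at hx
    have fix : ∀ (L : List ℕ), (∀ y ∈ L, y ∈ S) → formPerm (L.map f) x = x := by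
      intro L hLS'
      apply List.formPerm_apply_of_notMem
      intro hmem
      obtain ⟨l, hl, he⟩ := List.mem_map.1 hmem
      exact (hx l (hLS' l hl)) he
    rw [fix L2 hS2, fix L1 hS1, fix L3 hS3]

lemma cycleType_fp {β : Type*} [Fintype β] [DecidableEq β] (l : List β)
    (h : l.Nodup) (h2 : 2 ≤ l.length) : (formPerm l).cycleType = {l.length} := by
  have hc := List.isCycle_formPerm h h2
  rw [hc.cycleType]
  rw [List.support_formPerm_of_nodup l h (by intro x hx; rw [hx] at h2; simp at h2)]
  rw [List.toFinset_card_of_nodup h]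

lemma support_fp {β : Type*} [Fintype β] [DecidableEq β] (l : List β)
    (h : l.Nodup) (h2 : 2 ≤ l.length) : (formPerm l).support = l.toFinset :=
  List.support_formPerm_of_nodup l h (by intro x hx; rw [hx] at h2; simp at h2)

lemma moved_fp {β : Type*} [DecidableEq β] (l : List β)
    (h : l.Nodup) (h2 : 2 ≤ l.length) (x : β) (hx : x ∈ l) : formPerm l x ≠ x :=
  (List.formPerm_apply_mem_ne_self_iff l h x hx).2 h2

lemma reach {n : ℕ} (G : Subgroup (Equiv.Perm (Fin n))) (σ : Equiv.Perm (Fin n))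
    (hσ : σ ∈ G) (hc : σ.IsCycle) (x y : Fin n) (hx : σ x ≠ x) (hy : σ y ≠ y) :
    ∃ h ∈ G, h x = y := by
  obtain ⟨i, hi⟩ := hc.exists_pow_eq hx hy
  exact ⟨σ ^ i, pow_mem hσ i, hi⟩

end HurAux2

namespace HurAux2

lemma units_pow_parity (a b : ℕ) (h : (-1 : ℤˣ)^a = (-1 : ℤˣ)^b) : a % 2 = b % 2 := by
  rcases Nat.even_or_odd a with ha | ha <;> rcases Nat.even_or_odd b with hb | hb
  · rw [Nat.even_iff] at ha hb; omega
  · rw [ha.neg_one_pow, hb.neg_one_pow] at h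
    exact absurd h (by decide)
  · rw [ha.neg_one_pow, hb.neg_one_pow] at h
    exact absurd h (by decide)
  · rw [Nat.odd_iff] at ha hb; omega

lemma ofFn_prod_four {M : Type*} [Monoid M] (g : Fin 4 → M) :
    (List.ofFn g).prod = g 0 * g 1 * g 2 * g 3 := by
  have h : List.ofFn g = [g 0, g 1, g 2, g 3] := by
    simp [List.ofFn_succ]
  rw [h]
  simp [mul_assoc]

end HurAux2


/-- Two tuples of permutations are related by simultaneous conjugation. -/
def SimConj {d r : ℕ} (g g' : Fin r → Equiv.Perm (Fin d)) : Prop :=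
  ∃ h : Equiv.Perm (Fin d), ∀ i, g' i = h * g i * h⁻¹

/-- The subgroup generated by the entries of the tuple acts transitively on `Fin d`. -/
def TransitiveTuple {d r : ℕ} (g : Fin r → Equiv.Perm (Fin d)) : Prop :=
  ∀ x y : Fin d, ∃ h ∈ Subgroup.closure (Set.range g), h x = y

/-- `g` is a Hurwitz factorization of type `(d; C 0, …, C (r-1))`: each `g i` has cycle
type `C i`, the product `g 0 * ⋯ * g (r-1)` is the identity, and the entries generate a
transitive subgroup of `S_d`. -/
def IsHurwitz {d r : ℕ} (C : Fin r → Multiset ℕ) (g : Fin r → Equiv.Perm (Fin d)) : Prop :=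
  (∀ i, (g i).cycleType = C i) ∧ (List.ofFn g).prod = 1 ∧ TransitiveTuple g

/-- The Hurwitz number `h(d; C 0, …, C (r-1))`: the number of Hurwitz factorizations up to
simultaneous conjugation by an element of `S_d`. -/
noncomputable def hurwitzNumber (d : ℕ) {r : ℕ} (C : Fin r → Multiset ℕ) : ℕ :=
  Nat.card (Quot (fun x y : {g : Fin r → Equiv.Perm (Fin d) // IsHurwitz C g} =>
    SimConj x.1 y.1))

/-- `σ` is a single `m`-cycle; by convention a `1`-cycle means the identity. -/
def IsSingleCycleOfLength {d : ℕ} (m : ℕ) (σ : Equiv.Perm (Fin d)) : Prop :=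
  if m = 1 then σ = 1 else σ.cycleType = {m}

set_option maxHeartbeats 2000000 in
open HurAux2 in
/-- for `2 ≤ e₁ ≤ e₂ ≤ e₃ ≤ e₄ ≤ d`, `∑ eᵢ = 2d + 2`, and
`d + 1 ≥ e₂ + e₃`, there is a Hurwitz factorization of type `(d; e₁, e₂, e₃, e₄)` with
`g₃ g₄` a single `m`-cycle iff `e₄ − e₃ + 1 ≤ m ≤ 2d + 1 − e₃ − e₄` and
`m ≡ e₂ − e₁ + 1 (mod 2)`. -/
theorem admissible_single_cycle_exists_iff_of_ge
    (d e₁ e₂ e₃ e₄ m : ℕ) (hd : 2 ≤ d) (hm : 1 ≤ m)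
    (h₁ : 2 ≤ e₁) (h₁₂ : e₁ ≤ e₂) (h₂₃ : e₂ ≤ e₃) (h₃₄ : e₃ ≤ e₄) (h₄d : e₄ ≤ d)
    (hsum : e₁ + e₂ + e₃ + e₄ = 2 * d + 2)
    (hcase : e₂ + e₃ ≤ d + 1) :
    (∃ g : Fin 4 → Equiv.Perm (Fin d),
        IsHurwitz ![({e₁} : Multiset ℕ), {e₂}, {e₃}, {e₄}] g ∧
        IsSingleCycleOfLength m (g 2 * g 3)) ↔
      (e₄ - e₃ + 1 ≤ m ∧ m ≤ 2 * d + 1 - e₃ - e₄ ∧ m % 2 = (e₂ - e₁ + 1) % 2) := by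
  constructor
  · -- FORWARD
    rintro ⟨g, ⟨hcyc, hprod, -⟩, hsc⟩
    have hc0 : (g 0).cycleType = {e₁} := by simpa using hcyc 0
    have hc1 : (g 1).cycleType = {e₂} := by simpa using hcyc 1
    have hc2 : (g 2).cycleType = {e₃} := by simpa using hcyc 2
    have hc3 : (g 3).cycleType = {e₄} := by simpa using hcyc 3
    rw [ofFn_prod_four g] at hprod
    by_cases hm1 : m = 1
    · subst hm1
      rw [IsSingleCycleOfLength, if_pos rfl] at hsc
      have h23 : g 2 = (g 3)⁻¹ := mul_eq_one_iff_eq_inv.1 hsc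
      have he34 : e₃ = e₄ := by
        have : ({e₃} : Multiset ℕ) = {e₄} := by
          rw [← hc2, ← hc3, h23, Equiv.Perm.cycleType_inv]
        exact Multiset.singleton_inj.1 this
      have h01 : g 0 * g 1 = 1 := by
        have : g 0 * g 1 * (g 2 * g 3) = 1 := by rw [← hprod]; group
        rw [hsc, mul_one] at this
        exact this
      have h0 : g 0 = (g 1)⁻¹ := mul_eq_one_iff_eq_inv.1 h01
      have he12 : e₁ = e₂ := by
        have : ({e₁} : Multiset ℕ) = {e₂} := by
          rw [← hc0, ← hc1, h0, Equiv.Perm.cycleType_inv]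
        exact Multiset.singleton_inj.1 this
      omega
    · rw [IsSingleCycleOfLength, if_neg hm1] at hsc
      -- sign parity
      have s23 : Equiv.Perm.sign (g 2 * g 3) = (-1 : ℤˣ)^(m+1) := by
        rw [Equiv.Perm.sign_of_cycleType, hsc]
        norm_num
      have s2 : Equiv.Perm.sign (g 2) = (-1 : ℤˣ)^(e₃+1) := by
        rw [Equiv.Perm.sign_of_cycleType, hc2]
        norm_num
      have s3 : Equiv.Perm.sign (g 3) = (-1 : ℤˣ)^(e₄+1) := by
        rw [Equiv.Perm.sign_of_cycleType, hc3]
        norm_num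
      have hsgn : (-1 : ℤˣ)^(m+1) = (-1 : ℤˣ)^(e₃+1+(e₄+1)) := by
        rw [← s23, Equiv.Perm.sign_mul, s2, s3, ← pow_add]
      have hpar : (m + 1) % 2 = (e₃ + 1 + (e₄ + 1)) % 2 := units_pow_parity _ _ hsgn
      -- support cards
      have hs0 : (g 0).support.card = e₁ := by
        rw [← Equiv.Perm.sum_cycleType, hc0, Multiset.sum_singleton]
      have hs1 : (g 1).support.card = e₂ := by
        rw [← Equiv.Perm.sum_cycleType, hc1, Multiset.sum_singleton]
      have hs2 : (g 2).support.card = e₃ := by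
        rw [← Equiv.Perm.sum_cycleType, hc2, Multiset.sum_singleton]
      have hs3 : (g 3).support.card = e₄ := by
        rw [← Equiv.Perm.sum_cycleType, hc3, Multiset.sum_singleton]
      have hsm : ((g 2) * (g 3)).support.card = m := by
        rw [← Equiv.Perm.sum_cycleType, hsc, Multiset.sum_singleton]
      -- m ≤ e1 + e2
      have hprod2 : (g 0 * g 1) * (g 2 * g 3) = 1 := by rw [← hprod]; group
      have hkey : g 2 * g 3 = (g 0 * g 1)⁻¹ := (inv_eq_of_mul_eq_one_right hprod2).symm
      have hA : m ≤ e₁ + e₂ := by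
        have h1 : ((g 0) * (g 1)).support.card ≤ e₁ + e₂ := by
          calc ((g 0) * (g 1)).support.card
              ≤ ((g 0).support ∪ (g 1).support).card :=
                Finset.card_le_card (Equiv.Perm.support_mul_le _ _)
            _ ≤ _ := by rw [← hs0, ← hs1]; exact Finset.card_union_le _ _
        rw [← hsm, hkey, Equiv.Perm.support_inv]
        exact h1
      -- e4 ≤ e3 + m
      have hB : e₄ ≤ e₃ + m := by
        have h1 : ((g 2)⁻¹ * (g 2 * g 3)).support.card ≤ e₃ + m := by
          calc ((g 2)⁻¹ * (g 2 * g 3)).support.card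
              ≤ ((g 2)⁻¹.support ∪ ((g 2) * (g 3)).support).card :=
                Finset.card_le_card (Equiv.Perm.support_mul_le _ _)
            _ ≤ _ := by
                rw [← hsm, ← hs2, ← Equiv.Perm.support_inv (g 2)]
                exact Finset.card_union_le _ _
        have h2 : (g 2)⁻¹ * (g 2 * g 3) = g 3 := by group
        rw [h2, hs3] at h1
        exact h1
      omega
  · -- BACKWARD
    rintro ⟨hm1, hm2, hp⟩
    -- numeric setup
    obtain ⟨t1, ht1⟩ : ∃ t1, e₁ + m + 1 = e₂ + 2 * t1 := ⟨(e₁ + m + 1 - e₂) / 2, by omega⟩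
    obtain ⟨t2, ht2⟩ : ∃ t2, e₃ + m + 1 = e₄ + 2 * t2 := ⟨(e₃ + m + 1 - e₄) / 2, by omega⟩
    obtain ⟨u1, hu1⟩ : ∃ u1, e₁ = u1 + t1 := ⟨e₁ - t1, by omega⟩
    obtain ⟨u2, hu2⟩ : ∃ u2, e₃ = u2 + t2 := ⟨e₃ - t2, by omega⟩
    have ht1a : 1 ≤ t1 := by omega
    have ht1b : t1 ≤ m := by omega
    have ht2a : 1 ≤ t2 := by omega
    have ht2b : t2 ≤ m := by omega
    have hdeq : d = u1 + m + u2 := by omega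
    have hu1m : u1 + m ≤ d := by omega
    have hu2m : u2 + m ≤ d := by omega
    have hd0 : 0 < d := by omega
    set f1 : ℕ → Fin d := fun k => ⟨k % d, Nat.mod_lt _ hd0⟩ with hf1
    set n2 : ℕ → ℕ := fun k =>
      if k < u2 then u1 + m + k
      else if k < u2 + t2 then u1 + (m - t2) + (k - u2)
      else u1 + (k - u2 - t2) with hn2
    set f2 : ℕ → Fin d := fun k => f1 (n2 k) with hf2
    have hf1v : ∀ k, k < d → ((f1 k : Fin d) : ℕ) = k := fun k hk => Nat.mod_eq_of_lt hk
    have hinj1 : Set.InjOn f1 (Set.Iio (u1 + m)) := by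
      intro a ha b hb hab
      simp only [Set.mem_Iio] at ha hb
      have h' := congrArg Fin.val hab
      rwa [hf1v a (by omega), hf1v b (by omega)] at h'
    have hn2lt : ∀ k, k < u2 + m → n2 k < d := by
      intro k hk
      simp only [hn2]
      split_ifs <;> omega
    have hf2v : ∀ k, k < u2 + m → ((f2 k : Fin d) : ℕ) = n2 k := fun k hk =>
      hf1v _ (hn2lt k hk)
    have hinj2 : Set.InjOn f2 (Set.Iio (u2 + m)) := by
      intro a ha b hb hab
      simp only [Set.mem_Iio] at ha hb
      have h' := congrArg Fin.val hab
      rw [hf2v a (by omega), hf2v b (by omega)] at h'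
      simp only [hn2] at h'
      split_ifs at h' <;> omega
    -- list subset facts
    have hsub_ρ1 : ∀ x ∈ List.range' u1 m, x ∈ Set.Iio (u1 + m) := by
      intro x hx; rw [List.mem_range'_1] at hx; simp only [Set.mem_Iio]; omega
    have hsub_α1 : ∀ x ∈ List.range u1 ++ (List.range' u1 t1).reverse, x ∈ Set.Iio (u1 + m) := by
      intro x hx
      simp only [List.mem_append, List.mem_range, List.mem_reverse, List.mem_range'_1] at hx
      simp only [Set.mem_Iio]; omega
    have hsub_γ1 : ∀ x ∈ List.range u1 ++ List.range' (u1+t1) (m-t1) ++ [u1],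
        x ∈ Set.Iio (u1 + m) := by
      intro x hx
      simp only [List.mem_append, List.mem_range, List.mem_range'_1, List.mem_singleton] at hx
      simp only [Set.mem_Iio]; omega
    have hsub_ρ2 : ∀ x ∈ List.range' u2 m, x ∈ Set.Iio (u2 + m) := by
      intro x hx; rw [List.mem_range'_1] at hx; simp only [Set.mem_Iio]; omega
    have hsub_α2 : ∀ x ∈ List.range u2 ++ (List.range' u2 t2).reverse, x ∈ Set.Iio (u2 + m) := by
      intro x hx
      simp only [List.mem_append, List.mem_range, List.mem_reverse, List.mem_range'_1] at hx
      simp only [Set.mem_Iio]; omega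
    have hsub_γ2 : ∀ x ∈ List.range u2 ++ List.range' (u2+t2) (m-t2) ++ [u2],
        x ∈ Set.Iio (u2 + m) := by
      intro x hx
      simp only [List.mem_append, List.mem_range, List.mem_range'_1, List.mem_singleton] at hx
      simp only [Set.mem_Iio]; omega
    -- mapped-nodup helper
    have hmapnd : ∀ (f : ℕ → Fin d) (S : Set ℕ), Set.InjOn f S → ∀ (L : List ℕ), L.Nodup →
        (∀ x ∈ L, x ∈ S) → (L.map f).Nodup := fun f S hf L hL hLS =>
      List.Nodup.map_on (fun x hx y hy hxy => hf (hLS x hx) (hLS y hy) hxy) hL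
    have ndρ1 : ((List.range' u1 m).map f1).Nodup :=
      hmapnd f1 _ hinj1 _ ((List.nodup_range' (s := u1) (n := m))) hsub_ρ1
    have ndα1 : (((List.range u1 ++ (List.range' u1 t1).reverse)).map f1).Nodup :=
      hmapnd f1 _ hinj1 _ (alpha_nodup' u1 t1) hsub_α1
    have ndγ1 : ((List.range u1 ++ List.range' (u1+t1) (m-t1) ++ [u1]).map f1).Nodup :=
      hmapnd f1 _ hinj1 _ (gamma_nodup' u1 t1 m ht1a) hsub_γ1
    have ndα2 : (((List.range u2 ++ (List.range' u2 t2).reverse)).map f2).Nodup :=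
      hmapnd f2 _ hinj2 _ (alpha_nodup' u2 t2) hsub_α2
    -- permutations
    set ρ : Equiv.Perm (Fin d) := List.formPerm ((List.range' u1 m).map f1) with hρdef
    set g0 : Equiv.Perm (Fin d) :=
      List.formPerm ((List.range u1 ++ (List.range' u1 t1).reverse).map f1) with hg0def
    set γ1 : Equiv.Perm (Fin d) :=
      List.formPerm ((List.range u1 ++ List.range' (u1+t1) (m-t1) ++ [u1]).map f1)
      with hγ1def
    set α2 : Equiv.Perm (Fin d) :=
      List.formPerm ((List.range u2 ++ (List.range' u2 t2).reverse).map f2) with hα2def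
    set γ2 : Equiv.Perm (Fin d) :=
      List.formPerm ((List.range u2 ++ List.range' (u2+t2) (m-t2) ++ [u2]).map f2)
      with hγ2def
    -- transported core identities
    have hC1 : ρ * g0 = γ1 :=
      formPerm_map_mul f1 _ hinj1 _ _ _ ((List.nodup_range' (s := u1) (n := m))) (alpha_nodup' u1 t1)
        (gamma_nodup' u1 t1 m ht1a) hsub_ρ1 hsub_α1 hsub_γ1 (core u1 t1 m ht1a ht1b)
    have hC2' : List.formPerm ((List.range' u2 m).map f2) * α2 = γ2 :=
      formPerm_map_mul f2 _ hinj2 _ _ _ ((List.nodup_range' (s := u2) (n := m))) (alpha_nodup' u2 t2)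
        (gamma_nodup' u2 t2 m ht2a) hsub_ρ2 hsub_α2 hsub_γ2 (core u2 t2 m ht2a ht2b)
    -- the second rho equals the first
    have hLmap : (List.range' u2 m).map n2 =
        List.range' (u1+(m-t2)) t2 ++ List.range' u1 (m-t2) := by
      apply List.ext_getElem (by simp; omega)
      intro i h1' h2'
      by_cases hi : i < t2
      · rw [List.getElem_append_left (by simp; omega)]
        simp only [List.getElem_map, List.getElem_range', hn2]
        split_ifs <;> omega
      · rw [List.getElem_append_right (by simp; omega)]
        simp only [List.getElem_map, List.getElem_range', List.length_range', hn2]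
        split_ifs <;> omega
    have hsplit : List.range' u1 (m-t2) ++ List.range' (u1+(m-t2)) t2 = List.range' u1 m := by
      conv_rhs => rw [show m = t2 + (m - t2) by omega]
      rw [Nat.add_comm t2 (m - t2)]; exact List.range'_append_1 (s := u1) (m := m-t2) (n := t2)
    have hρ2ρ : List.formPerm ((List.range' u2 m).map f2) = ρ := by
      have hmid : (List.range' u2 m).map f2 =
          (((List.range' u1 (m-t2)).map f1 ++ (List.range' (u1+(m-t2)) t2).map f1)).rotate
            ((List.range' u1 (m-t2)).map f1).length := by
        have hcomp : (List.range' u2 m).map f2 = ((List.range' u2 m).map n2).map f1 := by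
          rw [List.map_map]
          rfl
        rw [hcomp, hLmap, List.map_append]
        rw [List.rotate_eq_drop_append_take (by simp)]
        rw [List.drop_left, List.take_left]
      rw [hmid]
      have hndBA : (((List.range' u1 (m-t2)).map f1 ++ (List.range' (u1+(m-t2)) t2).map f1)).Nodup := by
        rw [← List.map_append, hsplit]
        exact ndρ1
      rw [List.formPerm_rotate _ hndBA]
      rw [← List.map_append, hsplit]
    have hC2 : ρ * α2 = γ2 := by rw [← hρ2ρ]; exact hC2'
    -- lengths
    have hlρ1 : ((List.range' u1 m).map f1).length = m := by simp
    have hlα1 : (((List.range u1 ++ (List.range' u1 t1).reverse)).map f1).length = e₁ := by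
      simp; omega
    have hlγ1 : ((List.range u1 ++ List.range' (u1+t1) (m-t1) ++ [u1]).map f1).length = e₂ := by
      simp; omega
    have hlα2 : (((List.range u2 ++ (List.range' u2 t2).reverse)).map f2).length = e₃ := by
      simp; omega
    have hlγ2 : ((List.range u2 ++ List.range' (u2+t2) (m-t2) ++ [u2]).map f2).length = e₄ := by
      simp; omega
    -- cycle types
    have hctg0 : g0.cycleType = {e₁} := by
      rw [hg0def, cycleType_fp _ ndα1 (by rw [hlα1]; omega), hlα1]
    have hctγ1 : γ1.cycleType = {e₂} := by
      rw [hγ1def, cycleType_fp _ ndγ1 (by rw [hlγ1]; omega), hlγ1]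
    have hctα2 : α2.cycleType = {e₃} := by
      rw [hα2def, cycleType_fp _ ndα2 (by rw [hlα2]; omega), hlα2]
    have hctγ2 : γ2.cycleType = {e₄} := by
      have ndγ2 : ((List.range u2 ++ List.range' (u2+t2) (m-t2) ++ [u2]).map f2).Nodup :=
        hmapnd f2 _ hinj2 _ (gamma_nodup' u2 t2 m ht2a) hsub_γ2
      rw [hγ2def, cycleType_fp _ ndγ2 (by rw [hlγ2]; omega), hlγ2]
    refine ⟨![g0, γ1⁻¹, α2⁻¹, α2 * ρ], ⟨?_, ?_, ?_⟩, ?_⟩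
    · -- cycle types of the tuple
      intro i
      fin_cases i
      · simpa using hctg0
      · show (γ1⁻¹).cycleType = _
        rw [Equiv.Perm.cycleType_inv]
        simpa using hctγ1
      · show (α2⁻¹).cycleType = _
        rw [Equiv.Perm.cycleType_inv]
        simpa using hctα2
      · show (α2 * ρ).cycleType = _
        have h4 : α2 * ρ = ρ⁻¹ * γ2 * ρ := by rw [← hC2]; group
        have h5 : (α2 * ρ).cycleType = γ2.cycleType := by
          rw [h4, show ρ⁻¹ * γ2 * ρ = ρ⁻¹ * γ2 * (ρ⁻¹)⁻¹ by rw [inv_inv]]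
          exact Equiv.Perm.cycleType_conj
        rw [h5, hctγ2]
        simp
    · -- product equals 1
      rw [ofFn_prod_four]
      show g0 * γ1⁻¹ * α2⁻¹ * (α2 * ρ) = 1
      rw [← hC1]
      group
    · -- transitivity
      intro x y
      set G := Subgroup.closure
        (Set.range ![g0, γ1⁻¹, α2⁻¹, α2 * ρ]) with hG
      have hg0G : g0 ∈ G := Subgroup.subset_closure ⟨0, rfl⟩
      have hα2iG : α2⁻¹ ∈ G := Subgroup.subset_closure ⟨2, rfl⟩
      have hg3G : α2 * ρ ∈ G := Subgroup.subset_closure ⟨3, rfl⟩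
      have hα2G : α2 ∈ G := by
        have h := inv_mem hα2iG
        rwa [inv_inv] at h
      have hρG : ρ ∈ G := by
        have h := mul_mem hα2iG hg3G
        rwa [show α2⁻¹ * (α2 * ρ) = ρ by group] at h
      have hcyg0 : g0.IsCycle := by
        rw [hg0def]; exact List.isCycle_formPerm ndα1 (by rw [hlα1]; omega)
      have hcyα2 : α2.IsCycle := by
        rw [hα2def]; exact List.isCycle_formPerm ndα2 (by rw [hlα2]; omega)
      have hval : ∀ z : Fin d, f1 (z : ℕ) = z := fun z => Fin.ext (Nat.mod_eq_of_lt z.isLt)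
      -- moved points
      have hmovα1 : ∀ z : Fin d, (z : ℕ) < u1 + t1 → g0 z ≠ z := by
        intro z hz
        rw [hg0def]
        refine moved_fp _ ndα1 (by rw [hlα1]; omega) z ?_
        rw [← hval z]
        refine List.mem_map_of_mem (f := f1) ?_
        simp only [List.mem_append, List.mem_range, List.mem_reverse, List.mem_range'_1]
        omega
      have hmovρ : ∀ z : Fin d, 2 ≤ m → u1 ≤ (z : ℕ) → (z : ℕ) < u1 + m → ρ z ≠ z := by
        intro z h2 hz1 hz2
        rw [hρdef]
        refine moved_fp _ ndρ1 (by rw [hlρ1]; omega) z ?_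
        rw [← hval z]
        refine List.mem_map_of_mem (f := f1) ?_
        rw [List.mem_range'_1]
        omega
      have hu1lt : (f1 u1 : ℕ) = u1 := hf1v u1 (by omega)
      have claimA : ∀ z : Fin d, (z : ℕ) < u1 + m → ∃ h ∈ G, h z = f1 u1 := by
        intro z hz
        by_cases hz1 : (z : ℕ) < u1 + t1
        · exact reach G g0 hg0G hcyg0 z (f1 u1) (hmovα1 z hz1)
            (hmovα1 (f1 u1) (by rw [hu1lt]; omega))
        · have h2m : 2 ≤ m := by omega
          exact reach G ρ hρG (by
            rw [hρdef]; exact List.isCycle_formPerm ndρ1 (by rw [hlρ1]; omega)) z (f1 u1)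
            (hmovρ z h2m (by omega) hz)
            (hmovρ (f1 u1) h2m (by rw [hu1lt]) (by rw [hu1lt]; omega))
      have claim : ∀ z : Fin d, ∃ h ∈ G, h z = f1 u1 := by
        intro z
        by_cases hz : (z : ℕ) < u1 + m
        · exact claimA z hz
        · have hzd : (z : ℕ) < d := z.isLt
          have hk : (z : ℕ) - (u1 + m) < u2 := by omega
          have hfz : f2 ((z : ℕ) - (u1 + m)) = z := by
            apply Fin.ext
            rw [hf2v _ (by omega)]
            simp only [hn2]
            rw [if_pos hk]
            omega
          have hw2 : (f2 u2 : ℕ) = u1 + (m - t2) := by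
            rw [hf2v u2 (by omega)]
            simp only [hn2]
            rw [if_neg (by omega), if_pos (by omega)]
            omega
          have hmem_z : z ∈ (List.range u2 ++ (List.range' u2 t2).reverse).map f2 := by
            rw [← hfz]
            refine List.mem_map_of_mem (f := f2) ?_
            simp only [List.mem_append, List.mem_range, List.mem_reverse, List.mem_range'_1]
            omega
          have hmem_w : f2 u2 ∈ (List.range u2 ++ (List.range' u2 t2).reverse).map f2 := by
            refine List.mem_map_of_mem (f := f2) ?_
            simp only [List.mem_append, List.mem_range, List.mem_reverse, List.mem_range'_1]
            omega
          obtain ⟨h1, hh1G, hh1⟩ := reach G α2 hα2G hcyα2 z (f2 u2)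
            (by rw [hα2def]; exact moved_fp _ ndα2 (by rw [hlα2]; omega) z hmem_z)
            (by rw [hα2def]; exact moved_fp _ ndα2 (by rw [hlα2]; omega) _ hmem_w)
          obtain ⟨h2, hh2G, hh2⟩ := claimA (f2 u2) (by rw [hw2]; omega)
          exact ⟨h2 * h1, mul_mem hh2G hh1G, by rw [Equiv.Perm.mul_apply, hh1, hh2]⟩
      obtain ⟨hx, hxG, hxe⟩ := claim x
      obtain ⟨hy, hyG, hye⟩ := claim y
      refine ⟨hy⁻¹ * hx, mul_mem (inv_mem hyG) hxG, ?_⟩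
      rw [Equiv.Perm.mul_apply, hxe, ← hye]
      exact Equiv.symm_apply_apply hy y
    · -- single cycle of length m
      show IsSingleCycleOfLength m (α2⁻¹ * (α2 * ρ))
      rw [show α2⁻¹ * (α2 * ρ) = ρ by group]
      rw [IsSingleCycleOfLength]
      split_ifs with hmm
      · subst hmm
        rw [hρdef]
        rw [show List.range' u1 1 = [u1] from rfl]
        simp only [List.map_cons, List.map_nil]
        exact List.formPerm_singleton _
      · rw [hρdef, cycleType_fp _ ndρ1 (by rw [hlρ1]; omega), hlρ1]
end

section
/- Let p be a prime, k a field of characteristic p, and let e_1, e_2 be integers with 2 ≤ e_1 ≤ e_2 and e_1 + e_2 ≤ p. Then there exists a unique monic polynomial G ∈ k[y] of degree p − e_1 − e_2 such that, setting F(y) = y^{e_1} (y − 1)^{e_2} G(y), the formal derivative F′ equals γ · y^{e_1 − 1} (y − 1)^{e_2 − 1} for some γ ∈ k; moreover for this G the scalar γ is nonzero. -/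
open Polynomial

section TailCoverAux

lemma aux_cast_ne {k : Type*} [Field k] {p : ℕ} [CharP k p] (n : ℕ)
    (h0 : 0 < n) (h : n < p) : (n : k) ≠ 0 := by
  rw [Ne, CharP.cast_eq_zero_iff k p n]
  exact Nat.not_dvd_of_pos_of_lt h0 h

lemma aux_deriv_zero {k : Type*} [Field k] {p : ℕ} [CharP k p] (hp : 0 < p)
    (W : k[X]) (hW : W.natDegree ≤ p) (hd : derivative W = 0) :
    W = C (W.coeff p) * X ^ p + C (W.coeff 0) := by
  ext n
  rcases eq_or_ne n 0 with rfl | hn0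
  · simp [coeff_X_pow, hp.ne', Ne.symm hp.ne']
  rcases eq_or_ne n p with rfl | hnp
  · simp [coeff_X_pow, hn0, coeff_C, Ne.symm hn0]
  rw [coeff_add, coeff_C, if_neg hn0, coeff_C_mul, coeff_X_pow, if_neg hnp, mul_zero,
    add_zero]
  rcases lt_or_ge p n with h | h
  · exact coeff_eq_zero_of_natDegree_lt (lt_of_le_of_lt hW h)
  · have hn : n < p := lt_of_le_of_ne h hnp
    obtain ⟨m, rfl⟩ := Nat.exists_eq_succ_of_ne_zero hn0
    have := congrArg (fun f => Polynomial.coeff f m) hd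
    simp only [coeff_derivative, coeff_zero] at this
    have hcast : ((m:k) + 1) ≠ 0 := by
      have := aux_cast_ne (k := k) (p := p) (m+1) (Nat.succ_pos m) hn
      push_cast at this; exact this
    exact (mul_eq_zero.mp this).resolve_right hcast

lemma aux_prod_rule {k : Type*} [Field k] {e₁ e₂ : ℕ} (h1 : 1 ≤ e₁) (h2 : 1 ≤ e₂)
    (G : k[X]) :
    derivative (X ^ e₁ * (X - 1) ^ e₂ * G) =
      X ^ (e₁ - 1) * (X - 1) ^ (e₂ - 1) *
        (C (e₁:k) * (X - 1) * G + C (e₂:k) * X * G + X * (X - 1) * derivative G) := by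
  obtain ⟨a, rfl⟩ : ∃ a, e₁ = a + 1 := ⟨e₁ - 1, (Nat.succ_pred_eq_of_pos h1).symm⟩
  obtain ⟨b, rfl⟩ : ∃ b, e₂ = b + 1 := ⟨e₂ - 1, (Nat.succ_pred_eq_of_pos h2).symm⟩
  simp only [derivative_mul, derivative_X_pow, derivative_pow, derivative_sub,
    derivative_X, derivative_one, sub_zero, mul_one, Nat.add_sub_cancel]
  push_cast
  ring

lemma aux_Xd {k : Type*} [Field k] (G : k[X]) (n : ℕ) :
    (X * derivative G).coeff n = G.coeff n * n := by
  rcases Nat.eq_zero_or_pos n with rfl | hn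
  · simp
  · obtain ⟨l, rfl⟩ := Nat.exists_eq_succ_of_ne_zero hn.ne'
    rw [coeff_X_mul, coeff_derivative]
    push_cast
    ring

lemma aux_H_coeff_succ {k : Type*} [Field k] (a e : k) (G : k[X]) (m : ℕ) :
    (C a * (X - 1) * G + C e * X * G + X * (X - 1) * derivative G).coeff (m + 1)
      = (a + e + m) * G.coeff m - (a + m + 1) * G.coeff (m + 1) := by
  have hre : C a * (X - 1) * G + C e * X * G + X * (X - 1) * derivative G
      = C a * (X * G) + C e * (X * G) - C a * G + X * (X * derivative G)
        - X * derivative G := by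
    ring
  rw [hre]
  simp only [coeff_sub, coeff_add, aux_Xd, coeff_C_mul, coeff_X_mul, coeff_derivative]
  ring

lemma aux_H_coeff_zero {k : Type*} [Field k] (a e : k) (G : k[X]) :
    (C a * (X - 1) * G + C e * X * G + X * (X - 1) * derivative G).coeff 0
      = -a * G.coeff 0 := by
  have hre : C a * (X - 1) * G + C e * X * G + X * (X - 1) * derivative G
      = C a * (X * G) + C e * (X * G) - C a * G + X * (X * derivative G)
        - X * derivative G := by
    ring
  rw [hre]
  simp only [coeff_sub, coeff_add, coeff_C_mul, mul_coeff_zero, coeff_X_zero, zero_mul,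
    coeff_C_zero]
  ring

noncomputable def auxg (k : Type*) [Field k] (e₁ e₂ d i : ℕ) : k :=
  ∏ j ∈ Finset.Ico i d, ((e₁ + j + 1 : k) / (e₁ + e₂ + j : k))

noncomputable def auxG (k : Type*) [Field k] (e₁ e₂ d : ℕ) : k[X] :=
  ∑ i ∈ Finset.range (d + 1), C (auxg k e₁ e₂ d i) * X ^ i

lemma auxG_coeff (k : Type*) [Field k] (e₁ e₂ d n : ℕ) :
    (auxG k e₁ e₂ d).coeff n = if n ≤ d then auxg k e₁ e₂ d n else 0 := by
  rw [auxG, finset_sum_coeff]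
  simp only [coeff_C_mul, coeff_X_pow, mul_ite, mul_one, mul_zero]
  rw [Finset.sum_ite_eq (Finset.range (d+1)) n (fun i => auxg k e₁ e₂ d i)]
  simp [Nat.lt_succ_iff]

lemma auxg_top (k : Type*) [Field k] (e₁ e₂ d : ℕ) : auxg k e₁ e₂ d d = 1 := by
  simp [auxg]

lemma auxG_natDegree (k : Type*) [Field k] (e₁ e₂ d : ℕ) :
    (auxG k e₁ e₂ d).natDegree = d := by
  apply le_antisymm
  · rw [natDegree_le_iff_coeff_eq_zero]
    intro n hn
    rw [auxG_coeff, if_neg (by omega)]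
  · apply le_natDegree_of_ne_zero
    rw [auxG_coeff, if_pos le_rfl, auxg_top]
    exact one_ne_zero

lemma auxG_monic (k : Type*) [Field k] (e₁ e₂ d : ℕ) : (auxG k e₁ e₂ d).Monic := by
  rw [Monic, leadingCoeff, auxG_natDegree, auxG_coeff, if_pos le_rfl, auxg_top]

lemma auxg_rec {k : Type*} [Field k] {p : ℕ} [CharP k p]
    {e₁ e₂ : ℕ} (h₁ : 1 ≤ e₁) (h₂ : 1 ≤ e₂)
    {d m : ℕ} (hd : e₁ + e₂ + d = p) (hm : m < d) :
    ((e₁ : k) + e₂ + m) * auxg k e₁ e₂ d m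
      = ((e₁ : k) + m + 1) * auxg k e₁ e₂ d (m + 1) := by
  have hne : ((e₁ : k) + e₂ + m) ≠ 0 := by
    have := aux_cast_ne (k := k) (p := p) (e₁ + e₂ + m) (by omega) (by omega)
    push_cast at this; exact this
  rw [auxg, Finset.prod_eq_prod_Ico_succ_bot hm]
  rw [show (∏ j ∈ Finset.Ico (m+1) d, ((e₁ + j + 1 : k) / (e₁ + e₂ + j : k)))
        = auxg k e₁ e₂ d (m+1) from rfl]
  field_simp

lemma aux_H_const {k : Type*} [Field k] {p : ℕ} [CharP k p]
    {e₁ e₂ : ℕ} (h₁ : 1 ≤ e₁) (h₂ : 1 ≤ e₂)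
    {d : ℕ} (hd : e₁ + e₂ + d = p) :
    C ((e₁:k)) * (X - 1) * auxG k e₁ e₂ d + C ((e₂:k)) * X * auxG k e₁ e₂ d
      + X * (X - 1) * derivative (auxG k e₁ e₂ d)
      = C (-(e₁:k) * auxg k e₁ e₂ d 0) := by
  ext n
  rcases Nat.eq_zero_or_pos n with rfl | hn
  · rw [aux_H_coeff_zero, coeff_C_zero, auxG_coeff, if_pos (Nat.zero_le d)]
  obtain ⟨m, rfl⟩ := Nat.exists_eq_succ_of_ne_zero hn.ne'
  rw [aux_H_coeff_succ, coeff_C, if_neg (Nat.succ_ne_zero m)]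
  rcases lt_trichotomy m d with hmd | rfl | hmd
  · rw [auxG_coeff, if_pos hmd.le, auxG_coeff, if_pos (by omega : m + 1 ≤ d)]
    rw [sub_eq_zero]
    exact auxg_rec h₁ h₂ hd hmd
  · rw [auxG_coeff, if_pos le_rfl, auxG_coeff, if_neg (by omega), auxg_top, mul_one,
      mul_zero, sub_zero]
    have hcast : ((e₁ + e₂ + m : ℕ) : k) = 0 := by
      rw [hd]; exact CharP.cast_eq_zero k p
    push_cast at hcast
    rw [hcast]
  · rw [auxG_coeff, if_neg (by omega), auxG_coeff, if_neg (by omega), mul_zero, mul_zero,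
      sub_zero]

lemma aux_X1_monic {k : Type*} [Field k] : Monic (X - 1 : k[X]) := by
  simpa using monic_X_sub_C (1 : k)

lemma aux_X1_deg {k : Type*} [Field k] : (X - 1 : k[X]).natDegree = 1 := by
  simpa using natDegree_X_sub_C (1 : k)

lemma aux_F_monic {k : Type*} [Field k] (e₁ e₂ : ℕ) {G : k[X]} (hG : G.Monic) :
    Monic (X ^ e₁ * (X - 1) ^ e₂ * G) :=
  ((monic_X_pow e₁).mul (aux_X1_monic.pow e₂)).mul hG

lemma aux_F_deg {k : Type*} [Field k] (e₁ e₂ : ℕ) {G : k[X]} (hG : G.Monic) :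
    (X ^ e₁ * (X - 1) ^ e₂ * G).natDegree = e₁ + e₂ + G.natDegree := by
  rw [Monic.natDegree_mul ((monic_X_pow e₁).mul (aux_X1_monic.pow e₂)) hG,
    Monic.natDegree_mul (monic_X_pow e₁) (aux_X1_monic.pow e₂),
    natDegree_X_pow, Monic.natDegree_pow aux_X1_monic, aux_X1_deg, mul_one]

lemma aux_gamma_ne {k : Type*} [Field k] {p : ℕ} [CharP k p] (hp : p.Prime)
    {e₁ e₂ : ℕ} (h₁ : 2 ≤ e₁) (h₁₂ : e₁ ≤ e₂) (hsum : e₁ + e₂ ≤ p)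
    (G : k[X]) (hG : G.Monic) (hdeg : G.natDegree = p - e₁ - e₂)
    (γ : k) (heq : derivative (X ^ e₁ * (X - 1) ^ e₂ * G) =
      C γ * X ^ (e₁ - 1) * (X - 1) ^ (e₂ - 1)) : γ ≠ 0 := by
  rintro rfl
  rw [map_zero, zero_mul, zero_mul] at heq
  set F : k[X] := X ^ e₁ * (X - 1) ^ e₂ * G with hF
  have hmon : F.Monic := aux_F_monic e₁ e₂ hG
  have hdF : F.natDegree = p := by
    rw [hF, aux_F_deg e₁ e₂ hG, hdeg]; omega
  have hW := aux_deriv_zero hp.pos F hdF.le heq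
  have hc : F.coeff p = 1 := by
    rw [← hdF]; exact hmon
  rw [hc, map_one, one_mul] at hW
  have h0 : F.eval 0 = 0 := by
    rw [hF]
    simp [zero_pow (by omega : e₁ ≠ 0)]
  have h1 : F.eval 1 = 0 := by
    rw [hF]
    simp [zero_pow (by omega : e₂ ≠ 0)]
  rw [hW] at h0 h1
  simp [zero_pow hp.pos.ne'] at h0
  rw [eval_add, eval_pow, eval_X, one_pow, eval_C, h0, add_zero] at h1
  exact one_ne_zero h1

lemma aux_unique {k : Type*} [Field k] {p : ℕ} [CharP k p] (hp : p.Prime)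
    {e₁ e₂ d : ℕ} (h₁ : 2 ≤ e₁) (h₁₂ : e₁ ≤ e₂) (hsum : e₁ + e₂ ≤ p)
    (hd : e₁ + e₂ + d = p)
    (G₁ G₂ : k[X]) (hG₁ : G₁.Monic) (hG₂ : G₂.Monic)
    (hdeg₁ : G₁.natDegree = d) (hdeg₂ : G₂.natDegree = d)
    (γ₁ γ₂ : k) (hγ₁ : γ₁ ≠ 0)
    (heq₁ : derivative (X ^ e₁ * (X - 1) ^ e₂ * G₁) =
      C γ₁ * X ^ (e₁ - 1) * (X - 1) ^ (e₂ - 1))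
    (heq₂ : derivative (X ^ e₁ * (X - 1) ^ e₂ * G₂) =
      C γ₂ * X ^ (e₁ - 1) * (X - 1) ^ (e₂ - 1)) : G₁ = G₂ := by
  set W : k[X] := C γ₂ * (X ^ e₁ * (X - 1) ^ e₂ * G₁)
    - C γ₁ * (X ^ e₁ * (X - 1) ^ e₂ * G₂) with hWdef
  have hdW : derivative W = 0 := by
    rw [hWdef, derivative_sub, derivative_C_mul, derivative_C_mul, heq₁, heq₂]
    ring
  have hWfac : W = X ^ e₁ * (X - 1) ^ e₂ * (C γ₂ * G₁ - C γ₁ * G₂) := by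
    rw [hWdef]; ring
  have hWdeg : W.natDegree ≤ p := by
    rw [hWfac]
    refine le_trans (natDegree_mul_le) ?_
    have hA : (X ^ e₁ * (X - 1) ^ e₂ : k[X]).natDegree = e₁ + e₂ := by
      rw [Monic.natDegree_mul (monic_X_pow e₁) (aux_X1_monic.pow e₂),
        natDegree_X_pow, Monic.natDegree_pow aux_X1_monic, aux_X1_deg, mul_one]
    have hB : (C γ₂ * G₁ - C γ₁ * G₂).natDegree ≤ d := by
      refine le_trans (natDegree_sub_le _ _) (max_le ?_ ?_)
      · refine le_trans (natDegree_mul_le) ?_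
        rw [natDegree_C, hdeg₁]; omega
      · refine le_trans (natDegree_mul_le) ?_
        rw [natDegree_C, hdeg₂]; omega
    omega
  have hW := aux_deriv_zero hp.pos W hWdeg hdW
  have h0 : W.eval 0 = 0 := by
    rw [hWfac]
    simp [zero_pow (by omega : e₁ ≠ 0)]
  have h1 : W.eval 1 = 0 := by
    rw [hWfac]
    simp [zero_pow (by omega : e₂ ≠ 0)]
  rw [hW] at h0 h1
  simp [zero_pow hp.pos.ne'] at h0
  rw [eval_add, eval_mul, eval_pow, eval_X, one_pow, eval_C, eval_C, h0, add_zero,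
    mul_one] at h1
  have hW0 : W = 0 := by rw [hW, h0, h1]; simp
  rw [hWfac] at hW0
  have hfacne : (X ^ e₁ * (X - 1) ^ e₂ : k[X]) ≠ 0 :=
    ((monic_X_pow e₁).mul (aux_X1_monic.pow e₂)).ne_zero
  have hsub : C γ₂ * G₁ = C γ₁ * G₂ := by
    have := (mul_eq_zero.mp hW0).resolve_left hfacne
    rwa [sub_eq_zero] at this
  have hγeq : γ₂ = γ₁ := by
    have h := congrArg (fun f => Polynomial.coeff f d) hsub
    simp only [coeff_C_mul] at h
    rwa [← hdeg₁, Monic.coeff_natDegree hG₁, mul_one, hdeg₁, ← hdeg₂,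
      Monic.coeff_natDegree hG₂, mul_one] at h
  rw [hγeq] at hsub
  exact mul_left_cancel₀ (C_ne_zero.mpr hγ₁) hsub

/-- over a field `k` of characteristic `p`, for `2 ≤ e₁ ≤ e₂` with
`e₁ + e₂ ≤ p`, there is a unique monic polynomial `G` of degree `p − e₁ − e₂` such that
the derivative of `F = y^{e₁} (y − 1)^{e₂} G(y)` equals `γ ⬝ y^{e₁−1} (y − 1)^{e₂−1}`
for some scalar `γ`; moreover for this `G` the scalar `γ` is nonzero. -/
theorem tail_cover_polynomial_exists_unique
    (p : ℕ) (hp : p.Prime) (k : Type*) [Field k] [CharP k p]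
    (e₁ e₂ : ℕ) (h₁ : 2 ≤ e₁) (h₁₂ : e₁ ≤ e₂) (hsum : e₁ + e₂ ≤ p) :
    (∃! G : k[X], G.Monic ∧ G.natDegree = p - e₁ - e₂ ∧
      ∃ γ : k, derivative (X ^ e₁ * (X - 1) ^ e₂ * G) =
        C γ * X ^ (e₁ - 1) * (X - 1) ^ (e₂ - 1)) ∧
    (∀ G : k[X], G.Monic → G.natDegree = p - e₁ - e₂ →
      ∀ γ : k, derivative (X ^ e₁ * (X - 1) ^ e₂ * G) =
        C γ * X ^ (e₁ - 1) * (X - 1) ^ (e₂ - 1) → γ ≠ 0) := by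
  have h1' : 1 ≤ e₁ := by omega
  have h2' : 1 ≤ e₂ := by omega
  have hd : e₁ + e₂ + (p - e₁ - e₂) = p := by omega
  have heqG : derivative (X ^ e₁ * (X - 1) ^ e₂ * auxG k e₁ e₂ (p - e₁ - e₂)) =
      C (-(e₁:k) * auxg k e₁ e₂ (p - e₁ - e₂) 0) * X ^ (e₁ - 1) * (X - 1) ^ (e₂ - 1) := by
    rw [aux_prod_rule h1' h2', aux_H_const h1' h2' hd]
    ring
  constructor
  · refine ⟨auxG k e₁ e₂ (p - e₁ - e₂), ⟨auxG_monic k e₁ e₂ _,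
      auxG_natDegree k e₁ e₂ _, -(e₁:k) * auxg k e₁ e₂ (p - e₁ - e₂) 0, heqG⟩, ?_⟩
    rintro G₂ ⟨hG₂, hdeg₂, γ₂, heq₂⟩
    have hγ₂ : γ₂ ≠ 0 := aux_gamma_ne hp h₁ h₁₂ hsum G₂ hG₂ hdeg₂ γ₂ heq₂
    exact aux_unique hp h₁ h₁₂ hsum hd G₂ (auxG k e₁ e₂ (p - e₁ - e₂)) hG₂
      (auxG_monic k e₁ e₂ _) hdeg₂ (auxG_natDegree k e₁ e₂ _) γ₂
      (-(e₁:k) * auxg k e₁ e₂ (p - e₁ - e₂) 0) hγ₂ heq₂ heqG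
  · intro G hG hdeg γ heq
    exact aux_gamma_ne hp h₁ h₁₂ hsum G hG hdeg γ heq
end TailCoverAux
end

section
/- Let p be an odd prime and let a_1, a_2, a_3, a_4 be integers with 1 ≤ a_i ≤ p − 2 for each i and a_1 + a_2 + a_3 + a_4 = 2(p − 1). Consider the polynomial x^{p − a_1} (x − 1)^{p − 1 − a_2} (x − λ)^{p − 1 − a_3} with coefficients in the polynomial ring F_p[λ], regarded as a polynomial in x. Then its coefficient of x^p, which is an element c(λ) of F_p[λ], is not the zero polynomial. -/
open Polynomial

lemma cast_choose_ne_zero'' {p n k : ℕ} (hp : p.Prime) (hn : n < p) (hk : k ≤ n) :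
    ((n.choose k : ZMod p)) ≠ 0 := by
  haveI : NeZero p := ⟨hp.pos.ne'⟩
  have hnd : ¬ (p ∣ n.choose k) := by
    intro hd
    have h1 : n.choose k ∣ Nat.factorial n :=
      ⟨Nat.factorial k * Nat.factorial (n-k), by rw [← Nat.mul_assoc, Nat.choose_mul_factorial_mul_factorial hk]⟩
    have := (Nat.Prime.dvd_factorial hp).mp (hd.trans h1)
    omega
  simpa [ZMod.natCast_eq_zero_iff] using hnd

/-- for `p` an odd prime and `1 ≤ aᵢ ≤ p − 2` with
`a₁ + a₂ + a₃ + a₄ = 2(p − 1)`, the coefficient of `x^p` in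
`x^{p−a₁} (x − 1)^{p−1−a₂} (x − λ)^{p−1−a₃}`, viewed as a polynomial in `x` over
`F_p[λ]`, is a nonzero polynomial in `λ`. -/
theorem hasse_invariant_polynomial_ne_zero
    (p : ℕ) (hp : p.Prime) (hodd : Odd p)
    (a₁ a₂ a₃ a₄ : ℕ)
    (h₁ : 1 ≤ a₁) (h₂ : 1 ≤ a₂) (h₃ : 1 ≤ a₃) (h₄ : 1 ≤ a₄)
    (h₁' : a₁ ≤ p - 2) (h₂' : a₂ ≤ p - 2) (h₃' : a₃ ≤ p - 2) (h₄' : a₄ ≤ p - 2)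
    (hsum : a₁ + a₂ + a₃ + a₄ = 2 * (p - 1)) :
    ((X ^ (p - a₁) * (X - 1) ^ (p - 1 - a₂) *
        (X - C (X : (ZMod p)[X])) ^ (p - 1 - a₃) :
      Polynomial ((ZMod p)[X]))).coeff p ≠ 0 := by
  haveI := Fact.mk hp
  have hp2 := hp.two_le
  have hpne2 : p ≠ 2 := by rintro rfl; revert hodd; decide
  have hp3 : 3 ≤ p := by omega
  set R := ZMod p with hR
  set b₂ := p - 1 - a₂ with hb₂
  set b₃ := p - 1 - a₃ with hb₃
  set k₀ := a₁ - b₂ with hk₀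
  set j₀ := a₁ - k₀ with hj₀
  set d := b₃ - k₀ with hdd
  have hk₀b₃ : k₀ < b₃ := by omega
  have hj₀b₂ : j₀ ≤ b₂ := by omega
  have hb₂p : b₂ < p := by omega
  have hb₃p : b₃ < p := by omega
  intro hzero
  have hco : ((((X : Polynomial (R[X])) ^ (p - a₁) * (X - 1) ^ b₂ *
      (X - C (X : R[X])) ^ b₃).coeff p).coeff d) = 0 := by
    rw [hzero]; exact coeff_zero d
  rw [mul_assoc] at hco
  have hstep : ((X ^ (p - a₁) * ((X - 1) ^ b₂ * (X - C (X : R[X])) ^ b₃) :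
      Polynomial (R[X]))).coeff p
      = ((X - 1) ^ b₂ * (X - C (X : R[X])) ^ b₃ : Polynomial (R[X])).coeff a₁ := by
    rw [← coeff_X_pow_mul ((X - 1) ^ b₂ * (X - C (X : R[X])) ^ b₃) (p - a₁) a₁]
    congr 1
    omega
  rw [hstep, coeff_mul, finset_sum_coeff] at hco
  have hA : ∀ j, ((X - 1 : Polynomial (R[X])) ^ b₂).coeff j
      = (-1 : R[X]) ^ (b₂ - j) * (b₂.choose j : R[X]) := by
    intro j
    rw [show (X - 1 : Polynomial (R[X])) = X + C (-1) by rw [map_neg, map_one, ← sub_eq_add_neg],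
      coeff_X_add_C_pow]
  have hB : ∀ k, ((X - C (X : R[X])) ^ b₃).coeff k
      = (-(X : R[X])) ^ (b₃ - k) * (b₃.choose k : R[X]) := by
    intro k
    rw [show (X - C (X : R[X]) : Polynomial (R[X])) = X + C (-(X : R[X])) by
        rw [map_neg, ← sub_eq_add_neg], coeff_X_add_C_pow]
  have hterm : ∀ j k : ℕ,
      (((X - 1 : Polynomial (R[X])) ^ b₂).coeff j * ((X - C (X : R[X])) ^ b₃).coeff k).coeff d
      = ((-1 : R) ^ (b₂ - j) * (b₂.choose j : R) * ((-1 : R) ^ (b₃ - k) * (b₃.choose k : R)))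
        * (if d = b₃ - k then 1 else 0) := by
    intro j k
    rw [hA, hB]
    have : ((-1 : R[X]) ^ (b₂ - j) * (b₂.choose j : R[X]) *
        ((-(X : R[X])) ^ (b₃ - k) * (b₃.choose k : R[X])))
        = C ((-1 : R) ^ (b₂ - j) * (b₂.choose j : R) *
            ((-1 : R) ^ (b₃ - k) * (b₃.choose k : R))) * X ^ (b₃ - k) := by
      rw [neg_pow (X : R[X])]
      push_cast [map_mul, map_pow, map_neg, map_one, map_natCast]
      erw [map_natCast, map_natCast]
      ring
    rw [this, coeff_C_mul, coeff_X_pow]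
  rw [Finset.sum_congr rfl (fun x _ => hterm x.1 x.2)] at hco
  rw [Finset.sum_eq_single_of_mem (j₀, k₀) (by rw [Finset.HasAntidiagonal.mem_antidiagonal]; omega)] at hco
  · rw [if_pos rfl, mul_one] at hco
    have e1 : ((-1 : R) ^ (b₂ - j₀)) ≠ 0 := by
      apply pow_ne_zero; simp
    have e2 : ((b₂.choose j₀ : R)) ≠ 0 := cast_choose_ne_zero'' hp hb₂p hj₀b₂
    have e3 : ((-1 : R) ^ (b₃ - k₀)) ≠ 0 := by
      apply pow_ne_zero; simp
    have e4 : ((b₃.choose k₀ : R)) ≠ 0 := cast_choose_ne_zero'' hp hb₃p hk₀b₃.le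
    exact (mul_ne_zero (mul_ne_zero e1 e2) (mul_ne_zero e3 e4)) hco
  · rintro ⟨j, k⟩ hmem hne
    rw [Finset.HasAntidiagonal.mem_antidiagonal] at hmem
    simp only at *
    by_cases hj : j ≤ b₂
    · have hkk : k ≠ k₀ := by
        intro h; exact hne (by simp [Prod.ext_iff]; omega)
      have : d ≠ b₃ - k := by omega
      rw [if_neg this, mul_zero]
    · rw [Nat.choose_eq_zero_of_lt (by omega)]
      push_cast
      ring
end
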